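/- Let p, q, r be distinct primes, M = (pqr)², and let U = {u_0, ..., u_{p-1}}, V = {v_0, ..., v_{q-1}}, W = {w_0, ..., w_{r-1}} be sets of integers with u_i ≡ i (mod p), v_j ≡ j (mod q), w_k ≡ k (mod r). Define A = q²r²U + r²p²V + p²q²W ⊆ ℤ_M (the set of all sums q²r²u + r²p²v + p²q²w). Then |A| = pqr and Div(A) ⊆ {1, p², q², r², p²q², q²r², r²p², M}. -/

import Mathlib

open Finset

/-- The division set `Div(E) = {gcd(a - a', M) : a, a' ∈ E}`. -/
def DivSet {M : ℕ} (E : Finset (ZMod M)) : Set ℕ :=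
  {d | ∃ a ∈ E, ∃ b ∈ E, Nat.gcd ((a - b).val) M = d}


-- multiplicativity of gcd over coprime factors
lemma my_gcd_mul_coprime (n a b : ℕ) (h : Nat.Coprime a b) :
    Nat.gcd n (a * b) = Nat.gcd n a * Nat.gcd n b := by
  apply Nat.dvd_antisymm
  · simpa using Nat.gcd_mul_right_dvd_mul_gcd n a b
  · refine Nat.dvd_gcd ?_ (mul_dvd_mul (Nat.gcd_dvd_right n a) (Nat.gcd_dvd_right n b))
    have hcop : Nat.Coprime (Nat.gcd n a) (Nat.gcd n b) :=
      Nat.Coprime.coprime_dvd_right (Nat.gcd_dvd_right n b)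
        (Nat.Coprime.coprime_dvd_left (Nat.gcd_dvd_right n a) h)
    exact Nat.Coprime.mul_dvd_of_dvd_of_dvd hcop (Nat.gcd_dvd_left n a) (Nat.gcd_dvd_left n b)

-- a complete transversal mod p is injective mod p
lemma my_transversal (p : ℕ) (hp : p.Prime) (U : Finset ℤ) (hUcard : U.card = p)
    (hU : ∀ i : ℕ, i < p → ∃ u ∈ U, u % (p : ℤ) = i) :
    ∀ u ∈ U, ∀ u' ∈ U, (p : ℤ) ∣ u - u' → u = u' := by
  haveI : NeZero p := ⟨hp.pos.ne'⟩
  haveI : Fact p.Prime := ⟨hp⟩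
  have himg : U.image (fun u : ℤ => (u : ZMod p)) = Finset.univ := by
    apply Finset.eq_univ_of_forall
    intro z
    obtain ⟨u, hu, hmod⟩ := hU z.val (ZMod.val_lt z)
    refine Finset.mem_image.mpr ⟨u, hu, ?_⟩
    have h1 : ((u : ℤ) : ZMod p) = ((u % (p : ℤ) : ℤ) : ZMod p) := by
      rw [ZMod.intCast_eq_intCast_iff']
      exact (Int.emod_emod_of_dvd u dvd_rfl).symm
    rw [h1, hmod]
    simp [ZMod.natCast_val, ZMod.cast_id]
  have hinj : Set.InjOn (fun u : ℤ => (u : ZMod p)) U := by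
    apply Finset.injOn_of_card_image_eq
    rw [himg, Finset.card_univ, ZMod.card, hUcard]
  intro u hu u' hu' hdvd
  apply hinj hu hu'
  exact (ZMod.intCast_eq_intCast_iff _ _ _).mpr
    (Int.ModEq.symm (Int.modEq_iff_dvd.mpr hdvd))

-- p prime divides q²r²a + p·b, with p ≠ q, p ≠ r primes, then p ∣ a
lemma my_prime_dvd (p q r : ℕ) (hp : p.Prime) (hq : q.Prime) (hr : r.Prime)
    (hpq : p ≠ q) (hpr : p ≠ r) (a b : ℤ)
    (h : (p : ℤ) ∣ (q : ℤ) ^ 2 * (r : ℤ) ^ 2 * a + (p : ℤ) * b) : (p : ℤ) ∣ a := by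
  have hP : Prime ((p : ℕ) : ℤ) := Nat.prime_iff_prime_int.mp hp
  have h2 : (p : ℤ) ∣ (q : ℤ) ^ 2 * (r : ℤ) ^ 2 * a := by
    have := dvd_sub h (Dvd.intro b rfl)
    simpa using this
  have hnq : ¬ (p : ℤ) ∣ (q : ℤ) := by
    rw [Int.natCast_dvd_natCast]
    exact fun hd => hpq ((Nat.prime_dvd_prime_iff_eq hp hq).mp hd)
  have hnr : ¬ (p : ℤ) ∣ (r : ℤ) := by
    rw [Int.natCast_dvd_natCast]
    exact fun hd => hpr ((Nat.prime_dvd_prime_iff_eq hp hr).mp hd)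
  rcases hP.dvd_mul.mp h2 with h3 | h3
  · rcases hP.dvd_mul.mp h3 with h4 | h4
    · exact absurd (hP.dvd_of_dvd_pow h4) hnq
    · exact absurd (hP.dvd_of_dvd_pow h4) hnr
  · exact h3

-- per-prime analysis of gcd n p²
lemma my_key (p q r n : ℕ) (hp : p.Prime) (hq : q.Prime) (hr : r.Prime)
    (hpq : p ≠ q) (hpr : p ≠ r) (du e : ℤ)
    (hn : ((p : ℤ)) ^ 2 ∣ ((q : ℤ) ^ 2 * (r : ℤ) ^ 2 * du + (p : ℤ) ^ 2 * e) - (n : ℤ))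
    (hinj : (p : ℤ) ∣ du → du = 0) :
    (du = 0 → Nat.gcd n (p ^ 2) = p ^ 2) ∧ (du ≠ 0 → Nat.gcd n (p ^ 2) = 1) := by
  constructor
  · intro h0
    have h2 : ((p : ℤ)) ^ 2 ∣ ((p : ℤ) ^ 2 * e) - (n : ℤ) := by simpa [h0] using hn
    have h3 : ((p : ℤ)) ^ 2 ∣ (n : ℤ) := by
      have := dvd_sub (dvd_mul_right ((p : ℤ) ^ 2) e) h2
      simpa using this
    have h4 : p ^ 2 ∣ n := by exact_mod_cast h3
    exact Nat.dvd_antisymm (Nat.gcd_dvd_right _ _) (Nat.dvd_gcd h4 dvd_rfl)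
  · intro hne
    have hnd : ¬ p ∣ n := by
      intro hd
      have h1 : (p : ℤ) ∣ (n : ℤ) := by exact_mod_cast hd
      have h3 : (p : ℤ) ∣ ((q : ℤ) ^ 2 * (r : ℤ) ^ 2 * du + (p : ℤ) ^ 2 * e) - (n : ℤ) :=
        dvd_trans (dvd_pow_self _ two_ne_zero) hn
      have h2 : (p : ℤ) ∣ (q : ℤ) ^ 2 * (r : ℤ) ^ 2 * du + (p : ℤ) * ((p : ℤ) * e) := by
        have h4 : (q : ℤ) ^ 2 * (r : ℤ) ^ 2 * du + (p : ℤ) * ((p : ℤ) * e)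
            = (((q : ℤ) ^ 2 * (r : ℤ) ^ 2 * du + (p : ℤ) ^ 2 * e) - (n : ℤ)) + (n : ℤ) := by
          ring
        rw [h4]
        exact dvd_add h3 h1
      exact hne (hinj (my_prime_dvd p q r hp hq hr hpq hpr du ((p : ℤ) * e) h2))
    exact Nat.Coprime.pow_right 2 ((hp.coprime_iff_not_dvd).mpr hnd).symm

/-- If `U, V, W` are complete transversals mod `p`, `q`, `r` respectively and
`A = q²r²U + r²p²V + p²q²W ⊆ ℤ_M`, then `|A| = pqr` and
`Div(A) ⊆ {1, p², q², r², p²q², q²r², r²p², M}`. -/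
theorem stmt_8 (p q r M : ℕ) (hp : p.Prime) (hq : q.Prime) (hr : r.Prime)
    (hpq : p ≠ q) (hqr : q ≠ r) (hpr : p ≠ r) (hM : M = (p * q * r) ^ 2)
    (U V W : Finset ℤ)
    (hUcard : U.card = p) (hU : ∀ i : ℕ, i < p → ∃ u ∈ U, u % (p : ℤ) = i)
    (hVcard : V.card = q) (hV : ∀ j : ℕ, j < q → ∃ v ∈ V, v % (q : ℤ) = j)
    (hWcard : W.card = r) (hW : ∀ k : ℕ, k < r → ∃ w ∈ W, w % (r : ℤ) = k)
    (A : Finset (ZMod M))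
    (hA : A = (U ×ˢ V ×ˢ W).image fun t =>
      (((q : ℤ) ^ 2 * r ^ 2 * t.1 + (r : ℤ) ^ 2 * p ^ 2 * t.2.1
          + (p : ℤ) ^ 2 * q ^ 2 * t.2.2 : ℤ) : ZMod M)) :
    A.card = p * q * r ∧
    DivSet A ⊆ ({1, p ^ 2, q ^ 2, r ^ 2, p ^ 2 * q ^ 2, q ^ 2 * r ^ 2,
      r ^ 2 * p ^ 2, M} : Set ℕ) := by
  have hMZ : (M : ℤ) = (p : ℤ) ^ 2 * (q : ℤ) ^ 2 * (r : ℤ) ^ 2 := by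
    rw [hM]; push_cast; ring
  haveI : NeZero M := ⟨by
    rw [hM]
    exact pow_ne_zero 2 (Nat.mul_ne_zero (Nat.mul_ne_zero hp.pos.ne' hq.pos.ne') hr.pos.ne')⟩
  have hUinj := my_transversal p hp U hUcard hU
  have hVinj := my_transversal q hq V hVcard hV
  have hWinj := my_transversal r hr W hWcard hW
  constructor
  · rw [hA, Finset.card_image_of_injOn, Finset.card_product, Finset.card_product,
      hUcard, hVcard, hWcard, mul_assoc]
    rintro ⟨u, v, w⟩ ht ⟨u', v', w'⟩ ht' h
    simp only [Finset.coe_product, Set.mem_prod, Finset.mem_coe] at ht ht'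
    obtain ⟨hu, hv, hw⟩ := ht
    obtain ⟨hu', hv', hw'⟩ := ht'
    simp only at h
    have hmod : (M : ℤ) ∣ ((q : ℤ) ^ 2 * r ^ 2 * u' + (r : ℤ) ^ 2 * p ^ 2 * v'
        + (p : ℤ) ^ 2 * q ^ 2 * w') - ((q : ℤ) ^ 2 * r ^ 2 * u + (r : ℤ) ^ 2 * p ^ 2 * v
        + (p : ℤ) ^ 2 * q ^ 2 * w) :=
      Int.ModEq.dvd ((ZMod.intCast_eq_intCast_iff _ _ _).mp h)
    have hdp : (p : ℤ) ∣ (q : ℤ) ^ 2 * (r : ℤ) ^ 2 * (u' - u)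
        + (p : ℤ) * ((r : ℤ) ^ 2 * (p : ℤ) * (v' - v) + (p : ℤ) * (q : ℤ) ^ 2 * (w' - w)) := by
      have hpM : (p : ℤ) ∣ (M : ℤ) := ⟨(p : ℤ) * q ^ 2 * r ^ 2, by rw [hMZ]; ring⟩
      have h5 := hpM.trans hmod
      rw [show (q : ℤ) ^ 2 * (r : ℤ) ^ 2 * (u' - u)
        + (p : ℤ) * ((r : ℤ) ^ 2 * (p : ℤ) * (v' - v) + (p : ℤ) * (q : ℤ) ^ 2 * (w' - w))
        = ((q : ℤ) ^ 2 * r ^ 2 * u' + (r : ℤ) ^ 2 * p ^ 2 * v' + (p : ℤ) ^ 2 * q ^ 2 * w')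
        - ((q : ℤ) ^ 2 * r ^ 2 * u + (r : ℤ) ^ 2 * p ^ 2 * v + (p : ℤ) ^ 2 * q ^ 2 * w)
        from by ring]
      exact h5
    have hdq : (q : ℤ) ∣ (r : ℤ) ^ 2 * (p : ℤ) ^ 2 * (v' - v)
        + (q : ℤ) * ((q : ℤ) * (r : ℤ) ^ 2 * (u' - u) + (p : ℤ) ^ 2 * (q : ℤ) * (w' - w)) := by
      have hqM : (q : ℤ) ∣ (M : ℤ) := ⟨(p : ℤ) ^ 2 * q * r ^ 2, by rw [hMZ]; ring⟩
      have h5 := hqM.trans hmod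
      rw [show (r : ℤ) ^ 2 * (p : ℤ) ^ 2 * (v' - v)
        + (q : ℤ) * ((q : ℤ) * (r : ℤ) ^ 2 * (u' - u) + (p : ℤ) ^ 2 * (q : ℤ) * (w' - w))
        = ((q : ℤ) ^ 2 * r ^ 2 * u' + (r : ℤ) ^ 2 * p ^ 2 * v' + (p : ℤ) ^ 2 * q ^ 2 * w')
        - ((q : ℤ) ^ 2 * r ^ 2 * u + (r : ℤ) ^ 2 * p ^ 2 * v + (p : ℤ) ^ 2 * q ^ 2 * w)
        from by ring]
      exact h5
    have hdr : (r : ℤ) ∣ (p : ℤ) ^ 2 * (q : ℤ) ^ 2 * (w' - w)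
        + (r : ℤ) * ((q : ℤ) ^ 2 * (r : ℤ) * (u' - u) + (p : ℤ) ^ 2 * (r : ℤ) * (v' - v)) := by
      have hrM : (r : ℤ) ∣ (M : ℤ) := ⟨(p : ℤ) ^ 2 * q ^ 2 * r, by rw [hMZ]; ring⟩
      have h5 := hrM.trans hmod
      rw [show (p : ℤ) ^ 2 * (q : ℤ) ^ 2 * (w' - w)
        + (r : ℤ) * ((q : ℤ) ^ 2 * (r : ℤ) * (u' - u) + (p : ℤ) ^ 2 * (r : ℤ) * (v' - v))
        = ((q : ℤ) ^ 2 * r ^ 2 * u' + (r : ℤ) ^ 2 * p ^ 2 * v' + (p : ℤ) ^ 2 * q ^ 2 * w')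
        - ((q : ℤ) ^ 2 * r ^ 2 * u + (r : ℤ) ^ 2 * p ^ 2 * v + (p : ℤ) ^ 2 * q ^ 2 * w)
        from by ring]
      exact h5
    have hue : u' = u := hUinj u' hu' u hu (my_prime_dvd p q r hp hq hr hpq hpr _ _ hdp)
    have hve : v' = v := hVinj v' hv' v hv (my_prime_dvd q r p hq hr hp hqr (Ne.symm hpq) _ _ hdq)
    have hwe : w' = w := hWinj w' hw' w hw (my_prime_dvd r p q hr hp hq (Ne.symm hpr) (Ne.symm hqr) _ _ hdr)
    exact Prod.ext hue.symm (Prod.ext hve.symm hwe.symm)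
  · rintro d ⟨a, ha, b, hb, hgcd⟩
    rw [hA] at ha hb
    obtain ⟨⟨u, v, w⟩, ht, heqa⟩ := Finset.mem_image.mp ha
    obtain ⟨⟨u', v', w'⟩, ht', heqb⟩ := Finset.mem_image.mp hb
    simp only [Finset.mem_product] at ht ht'
    obtain ⟨hu, hv, hw⟩ := ht
    obtain ⟨hu', hv', hw'⟩ := ht'
    set x : ℤ := (q : ℤ) ^ 2 * r ^ 2 * u + (r : ℤ) ^ 2 * p ^ 2 * v + (p : ℤ) ^ 2 * q ^ 2 * w with hx
    set x' : ℤ := (q : ℤ) ^ 2 * r ^ 2 * u' + (r : ℤ) ^ 2 * p ^ 2 * v' + (p : ℤ) ^ 2 * q ^ 2 * w' with hx'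
    have haa : a = ((x : ℤ) : ZMod M) := heqa.symm
    have hbb : b = ((x' : ℤ) : ZMod M) := heqb.symm
    rw [haa, hbb] at hgcd
    set n : ℕ := (((x : ℤ) : ZMod M) - ((x' : ℤ) : ZMod M)).val with hn
    have hc : ((x : ℤ) : ZMod M) - ((x' : ℤ) : ZMod M) = (((x - x' : ℤ)) : ZMod M) := by
      push_cast; ring
    have hval : ((n : ℤ) : ZMod M) = ((x - x' : ℤ) : ZMod M) := by
      rw [hn, ← hc]
      simp [ZMod.natCast_val, ZMod.cast_id]
    have hnM : (M : ℤ) ∣ (x - x') - (n : ℤ) :=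
      Int.ModEq.dvd ((ZMod.intCast_eq_intCast_iff _ _ _).mp hval)
    have K1 := my_key p q r n hp hq hr hpq hpr (u - u')
      ((r : ℤ) ^ 2 * (v - v') + (q : ℤ) ^ 2 * (w - w'))
      (by
        have hpM : ((p : ℤ)) ^ 2 ∣ (M : ℤ) := ⟨(q : ℤ) ^ 2 * r ^ 2, by rw [hMZ]; ring⟩
        have h5 := hpM.trans hnM
        rw [show ((q : ℤ) ^ 2 * (r : ℤ) ^ 2 * (u - u')
          + (p : ℤ) ^ 2 * ((r : ℤ) ^ 2 * (v - v') + (q : ℤ) ^ 2 * (w - w'))) - (n : ℤ)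
          = (x - x') - (n : ℤ) from by rw [hx, hx']; ring]
        exact h5)
      (fun hd => sub_eq_zero.mpr (hUinj u hu u' hu' hd))
    have K2 := my_key q r p n hq hr hp hqr (Ne.symm hpq) (v - v')
      ((r : ℤ) ^ 2 * (u - u') + (p : ℤ) ^ 2 * (w - w'))
      (by
        have hqM : ((q : ℤ)) ^ 2 ∣ (M : ℤ) := ⟨(p : ℤ) ^ 2 * r ^ 2, by rw [hMZ]; ring⟩
        have h5 := hqM.trans hnM
        rw [show ((r : ℤ) ^ 2 * (p : ℤ) ^ 2 * (v - v')
          + (q : ℤ) ^ 2 * ((r : ℤ) ^ 2 * (u - u') + (p : ℤ) ^ 2 * (w - w'))) - (n : ℤ)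
          = (x - x') - (n : ℤ) from by rw [hx, hx']; ring]
        exact h5)
      (fun hd => sub_eq_zero.mpr (hVinj v hv v' hv' hd))
    have K3 := my_key r p q n hr hp hq (Ne.symm hpr) (Ne.symm hqr) (w - w')
      ((q : ℤ) ^ 2 * (u - u') + (p : ℤ) ^ 2 * (v - v'))
      (by
        have hrM : ((r : ℤ)) ^ 2 ∣ (M : ℤ) := ⟨(p : ℤ) ^ 2 * q ^ 2, by rw [hMZ]; ring⟩
        have h5 := hrM.trans hnM
        rw [show ((p : ℤ) ^ 2 * (q : ℤ) ^ 2 * (w - w')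
          + (r : ℤ) ^ 2 * ((q : ℤ) ^ 2 * (u - u') + (p : ℤ) ^ 2 * (v - v'))) - (n : ℤ)
          = (x - x') - (n : ℤ) from by rw [hx, hx']; ring]
        exact h5)
      (fun hd => sub_eq_zero.mpr (hWinj w hw w' hw' hd))
    have cpq : Nat.Coprime p q := (Nat.coprime_primes hp hq).mpr hpq
    have cpr : Nat.Coprime p r := (Nat.coprime_primes hp hr).mpr hpr
    have cqr : Nat.Coprime q r := (Nat.coprime_primes hq hr).mpr hqr
    have hgM : Nat.gcd n M = Nat.gcd n (p ^ 2) * Nat.gcd n (q ^ 2) * Nat.gcd n (r ^ 2) := by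
      rw [hM, show (p * q * r) ^ 2 = p ^ 2 * (q ^ 2 * r ^ 2) from by ring,
        my_gcd_mul_coprime _ _ _ (Nat.Coprime.mul_right (Nat.Coprime.pow 2 2 cpq) (Nat.Coprime.pow 2 2 cpr)),
        my_gcd_mul_coprime _ _ _ (Nat.Coprime.pow 2 2 cqr), mul_assoc]
    rw [← hgcd, hgM]
    simp only [Set.mem_insert_iff, Set.mem_singleton_iff]
    by_cases h1 : u = u' <;> by_cases h2 : v = v' <;> by_cases h3 : w = w'
    · rw [K1.1 (sub_eq_zero.mpr h1), K2.1 (sub_eq_zero.mpr h2), K3.1 (sub_eq_zero.mpr h3)]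
      exact Or.inr (Or.inr (Or.inr (Or.inr (Or.inr (Or.inr (Or.inr (by rw [hM]; ring)))))))
    · rw [K1.1 (sub_eq_zero.mpr h1), K2.1 (sub_eq_zero.mpr h2), K3.2 (sub_ne_zero.mpr h3)]
      exact Or.inr (Or.inr (Or.inr (Or.inr (Or.inl (by ring)))))
    · rw [K1.1 (sub_eq_zero.mpr h1), K2.2 (sub_ne_zero.mpr h2), K3.1 (sub_eq_zero.mpr h3)]
      exact Or.inr (Or.inr (Or.inr (Or.inr (Or.inr (Or.inr (Or.inl (by ring)))))))
    · rw [K1.1 (sub_eq_zero.mpr h1), K2.2 (sub_ne_zero.mpr h2), K3.2 (sub_ne_zero.mpr h3)]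
      exact Or.inr (Or.inl (by ring))
    · rw [K1.2 (sub_ne_zero.mpr h1), K2.1 (sub_eq_zero.mpr h2), K3.1 (sub_eq_zero.mpr h3)]
      exact Or.inr (Or.inr (Or.inr (Or.inr (Or.inr (Or.inl (by ring))))))
    · rw [K1.2 (sub_ne_zero.mpr h1), K2.1 (sub_eq_zero.mpr h2), K3.2 (sub_ne_zero.mpr h3)]
      exact Or.inr (Or.inr (Or.inl (by ring)))
    · rw [K1.2 (sub_ne_zero.mpr h1), K2.2 (sub_ne_zero.mpr h2), K3.1 (sub_eq_zero.mpr h3)]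
      exact Or.inr (Or.inr (Or.inr (Or.inl (by ring))))
    · rw [K1.2 (sub_ne_zero.mpr h1), K2.2 (sub_ne_zero.mpr h2), K3.2 (sub_ne_zero.mpr h3)]
      exact Or.inl (by ring)
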